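/- Suppose S, I is the solution of the controlled SIR system for some admissible control r with initial data S(0) ≥ 0 and I(0) > 0. Then the limit lim_{t→∞} S(t) exists and belongs to the half-open interval [0, γ/β), and lim_{t→∞} I(t) = 0. -/

import Mathlib

open MeasureTheory Set Filter Topology
open scoped Classical

noncomputable section

/-- An admissible vaccination-rate control: a measurable `r : ℝ → ℝ` with
`0 ≤ r t ≤ 1` for a.e. `t ≥ 0`. -/
def Admissible (r : ℝ → ℝ) : Prop :=
  Measurable r ∧ ∀ᵐ t : ℝ ∂volume, 0 ≤ t → 0 ≤ r t ∧ r t ≤ 1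

/-- `S, I` is a solution of the controlled SIR system with parameters `β, γ`,
control `r`, and initial data `x, y`:  they are continuous on `[0,∞)` and satisfy
`S t = x - ∫₀ᵗ (β S I + r S)` and `I t = y + ∫₀ᵗ (β S I - γ I)` for all `t ≥ 0`. -/
def IsSIRSol (β γ : ℝ) (r : ℝ → ℝ) (x y : ℝ) (S I : ℝ → ℝ) : Prop :=
  ContinuousOn S (Ici 0) ∧ ContinuousOn I (Ici 0) ∧
  (∀ t : ℝ, 0 ≤ t → S t = x - ∫ s in (0:ℝ)..t, (β * S s * I s + r s * S s)) ∧
  (∀ t : ℝ, 0 ≤ t → I t = y + ∫ s in (0:ℝ)..t, (β * S s * I s - γ * I s))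

/-- The susceptible component `S^r` of the solution of the controlled SIR system
(chosen via choice; it is unique on `[0,∞)`). -/
def sirS (β γ : ℝ) (r : ℝ → ℝ) (x y : ℝ) : ℝ → ℝ :=
  if h : ∃ p : (ℝ → ℝ) × (ℝ → ℝ), IsSIRSol β γ r x y p.1 p.2 then h.choose.1 else 0

/-- The infected component `I^r` of the solution of the controlled SIR system. -/
def sirI (β γ : ℝ) (r : ℝ → ℝ) (x y : ℝ) : ℝ → ℝ :=
  if h : ∃ p : (ℝ → ℝ) × (ℝ → ℝ), IsSIRSol β γ r x y p.1 p.2 then h.choose.2 else 0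

/-- The eradication time `u^r(x,y) = min { t ≥ 0 : I^r(t) = μ }`. -/
def eradTime (β γ μ : ℝ) (r : ℝ → ℝ) (x y : ℝ) : ℝ :=
  sInf {t : ℝ | 0 ≤ t ∧ sirI β γ r x y t = μ}

/-- The value function `u(x,y) = inf { u^r(x,y) : r admissible }`. -/
def value (β γ μ : ℝ) (x y : ℝ) : ℝ :=
  sInf {T : ℝ | ∃ r : ℝ → ℝ, Admissible r ∧ T = eradTime β γ μ r x y}

/-- The triangle `T_{N,δ} = {(x,y) : x ≥ δ, y ≥ μ + δ, x + y ≤ N}`. -/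
def Triangle (μ N δ : ℝ) : Set (ℝ × ℝ) :=
  {p : ℝ × ℝ | δ ≤ p.1 ∧ μ + δ ≤ p.2 ∧ p.1 + p.2 ≤ N}

/-- The partial derivative `∂ₓ u^r(z,w)` of the eradication time. -/
def uDx (β γ μ : ℝ) (r : ℝ → ℝ) (z w : ℝ) : ℝ :=
  deriv (fun a => eradTime β γ μ r a w) z

/-- The partial derivative `∂_y u^r(z,w)` of the eradication time. -/
def uDy (β γ μ : ℝ) (r : ℝ → ℝ) (z w : ℝ) : ℝ :=
  deriv (fun b => eradTime β γ μ r z b) w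

/-- The switching control `r_τ`: `0` on `[0,τ]` and `1` on `(τ,∞)`. -/
def switchCtrl (τ : ℝ) : ℝ → ℝ := fun t => if t ≤ τ then 0 else 1


lemma aux_ftc {g : ℝ → ℝ} (hg : ContinuousOn g (Ici 0)) {b : ℝ} (hb : 0 ≤ b) :
    HasDerivWithinAt (fun u => ∫ s in (0:ℝ)..u, g s) (g b) (Ici b) b := by
  have hsub : Ioi b ⊆ Ici (0:ℝ) := fun z hz => le_of_lt (lt_of_le_of_lt hb hz)
  apply intervalIntegral.integral_hasDerivWithinAt_right (t := Ioi b)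
  · exact (hg.mono (by rw [uIcc_of_le hb]; exact Icc_subset_Ici_self)).intervalIntegrable
  · exact ⟨Ici 0, mem_of_superset self_mem_nhdsWithin hsub,
      hg.aestronglyMeasurable measurableSet_Ici⟩
  · exact (hg b hb).mono hsub

lemma aux_int {r S : ℝ → ℝ} (hrm : Measurable r)
    (hrb : ∀ᵐ t : ℝ ∂volume, 0 ≤ t → 0 ≤ r t ∧ r t ≤ 1)
    (hS : ContinuousOn S (Ici 0)) {a b : ℝ} (ha : 0 ≤ a) (hab : a ≤ b) :
    IntervalIntegrable (fun s => r s * S s) volume a b := by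
  have hIcc : Icc a b ⊆ Ici (0:ℝ) := fun z hz => le_trans ha hz.1
  have hIoc : Ioc a b ⊆ Ici (0:ℝ) := fun z hz => le_trans ha (le_of_lt hz.1)
  obtain ⟨C, hC⟩ := (isCompact_Icc).exists_bound_of_continuousOn (hS.mono hIcc)
  rw [intervalIntegrable_iff, uIoc_of_le hab]
  refine Integrable.mono' (g := fun _ => C) ?_ ?_ ?_
  · rw [integrable_const_iff]; right
    constructor; rw [Measure.restrict_apply_univ]
    exact measure_Ioc_lt_top
  · exact (hrm.aestronglyMeasurable.restrict).mul
      ((hS.mono hIoc).aestronglyMeasurable measurableSet_Ioc)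
  · rw [ae_restrict_iff' measurableSet_Ioc]
    filter_upwards [hrb] with s hs hmem
    have h0s : (0:ℝ) ≤ s := hIoc hmem
    have := hs h0s
    have hSb := hC s ⟨le_of_lt hmem.1, hmem.2⟩
    rw [norm_mul]
    calc ‖r s‖ * ‖S s‖ ≤ 1 * C := by
          apply mul_le_mul _ hSb (norm_nonneg _) zero_le_one
          rw [Real.norm_eq_abs, abs_le]; exact ⟨by linarith [this.1], this.2⟩
      _ = C := one_mul C

lemma aux_main
    (β γ : ℝ) (hβ : 0 < β) (hγ : 0 < γ)
    (r : ℝ → ℝ) (hrm : Measurable r)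
    (hrb : ∀ᵐ t : ℝ ∂volume, 0 ≤ t → 0 ≤ r t ∧ r t ≤ 1)
    (x y : ℝ) (hx : 0 ≤ x) (hy : 0 < y)
    (S I : ℝ → ℝ)
    (hS : ContinuousOn S (Ici 0)) (hI : ContinuousOn I (Ici 0))
    (hSeq : ∀ t : ℝ, 0 ≤ t → S t = x - ∫ s in (0:ℝ)..t, (β * S s * I s + r s * S s))
    (hIeq : ∀ t : ℝ, 0 ≤ t → I t = y + ∫ s in (0:ℝ)..t, (β * S s * I s - γ * I s)) :
    (∃ L : ℝ, 0 ≤ L ∧ L < γ / β ∧ Tendsto S atTop (𝓝 L)) ∧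
    Tendsto I atTop (𝓝 0) := by
  set F : ℝ → ℝ := fun s => β * S s * I s + r s * S s with hF
  set G : ℝ → ℝ := fun s => β * S s * I s - γ * I s with hG
  set ψ : ℝ → ℝ := fun s => β * S s - γ with hψ
  set φ : ℝ → ℝ := fun t => ∫ s in (0:ℝ)..t, ψ s with hφ
  have hGcont : ContinuousOn G (Ici 0) :=
    ((continuousOn_const.mul hS).mul hI).sub (continuousOn_const.mul hI)
  have hψcont : ContinuousOn ψ (Ici 0) :=
    (continuousOn_const.mul hS).sub continuousOn_const
  have hS0 : S 0 = x := by simpa using hSeq 0 le_rfl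
  have hI0 : I 0 = y := by simpa using hIeq 0 le_rfl
  have hconsub : ∀ {a b : ℝ}, 0 ≤ a → a ≤ b → uIcc a b ⊆ Ici (0:ℝ) := by
    intro a b ha hab
    rw [uIcc_of_le hab]
    exact fun z hz => le_trans ha hz.1
  have hFint : ∀ a b : ℝ, 0 ≤ a → a ≤ b → IntervalIntegrable F volume a b := by
    intro a b ha hab
    exact ((((continuousOn_const.mul hS).mul hI).mono (hconsub ha hab)).intervalIntegrable).add
      (aux_int hrm hrb hS ha hab)
  have hGint : ∀ a b : ℝ, 0 ≤ a → a ≤ b → IntervalIntegrable G volume a b :=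
    fun a b ha hab => (hGcont.mono (hconsub ha hab)).intervalIntegrable
  have hψint : ∀ a b : ℝ, 0 ≤ a → a ≤ b → IntervalIntegrable ψ volume a b :=
    fun a b ha hab => (hψcont.mono (hconsub ha hab)).intervalIntegrable
  -- Step 1 : I t = y * exp (φ t)
  have hφ0 : φ 0 = 0 := intervalIntegral.integral_same
  have hIexp : ∀ t : ℝ, 0 ≤ t → I t = y * Real.exp (φ t) := by
    intro T hT
    set h : ℝ → ℝ := fun t => I t * Real.exp (-φ t) with hh
    have hφcont : ContinuousOn φ (Icc 0 T) := by
      have := intervalIntegral.continuousOn_primitive_interval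
        (a := (0:ℝ)) (b := T) (μ := volume) (f := ψ)
        (((hψcont.mono (hconsub le_rfl hT))).integrableOn_compact (isCompact_uIcc))
      simpa [uIcc_of_le hT] using this
    have hIsub : Icc (0:ℝ) T ⊆ Ici 0 := fun z hz => hz.1
    have hcont : ContinuousOn h (Icc 0 T) :=
      (hI.mono hIsub).mul (((hφcont.neg)).rexp)
    have hderiv : ∀ z ∈ Ico (0:ℝ) T, HasDerivWithinAt h 0 (Ici z) z := by
      intro z hz
      have hz0 : (0:ℝ) ≤ z := hz.1
      have hIci : Ici z ⊆ Ici (0:ℝ) := Ici_subset_Ici.2 hz0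
      have hider : HasDerivWithinAt I (G z) (Ici z) z := by
        have hbase := (aux_ftc hGcont hz0).const_add y
        exact hbase.congr (fun u hu => hIeq u (hIci hu)) (hIeq z hz0)
      have hφder : HasDerivWithinAt φ (ψ z) (Ici z) z := aux_ftc hψcont hz0
      have hexp : HasDerivWithinAt (fun t => Real.exp (-φ t))
          (Real.exp (-φ z) * (-ψ z)) (Ici z) z := (hφder.neg).exp
      have := hider.mul hexp
      have heq : G z * Real.exp (-φ z) + I z * (Real.exp (-φ z) * -ψ z) = 0 := by
        simp only [hG, hψ]; ring
      rw [heq] at this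
      exact this
    have hval := constant_of_has_deriv_right_zero hcont hderiv T ⟨hT, le_rfl⟩
    have h0 : h 0 = y := by simp [hh, hφ0, hI0]
    have : I T * Real.exp (-φ T) = y := by rw [← h0]; exact hval
    have hepos := Real.exp_pos (φ T)
    rw [Real.exp_neg] at this
    field_simp at this
    linarith [this]
  have hIpos : ∀ t : ℝ, 0 ≤ t → 0 < I t := by
    intro t ht; rw [hIexp t ht]; positivity
  -- S b - S a = -∫ F
  have hSdiff : ∀ a b : ℝ, 0 ≤ a → a ≤ b →
      S b - S a = -∫ s in a..b, F s := by
    intro a b ha hab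
    have hadd := intervalIntegral.integral_add_adjacent_intervals
      (hFint 0 a le_rfl ha) (hFint a b ha hab)
    rw [hSeq a ha, hSeq b (le_trans ha hab)]
    linarith [hadd]
  -- nonnegativity of S
  have hSnonneg : ∀ t : ℝ, 0 ≤ t → 0 ≤ S t := by
    intro t1 ht1
    by_contra hneg
    push_neg at hneg
    set K : Set ℝ := Icc 0 t1 ∩ S ⁻¹' (Ici 0) with hK
    have hKclosed : IsClosed K :=
      (hS.mono (fun z hz => hz.1)).preimage_isClosed_of_isClosed isClosed_Icc isClosed_Ici
    have hKcomp : IsCompact K := isCompact_Icc.of_isClosed_subset hKclosed inter_subset_left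
    have hKne : K.Nonempty :=
      ⟨0, mem_inter ⟨le_rfl, ht1⟩ (by simp only [mem_preimage, mem_Ici, hS0]; exact hx)⟩
    set c : ℝ := sSup K with hc
    have hcK : c ∈ K := hKcomp.sSup_mem hKne
    have hc0 : 0 ≤ c := hcK.1.1
    have hcS : 0 ≤ S c := hcK.2
    have hct : c < t1 := by
      rcases lt_or_eq_of_le hcK.1.2 with h | h
      · exact h
      · exfalso; rw [h] at hcS; linarith
    have hlt : ∀ s ∈ Ioc c t1, S s < 0 := by
      intro s hs
      by_contra hge
      push_neg at hge
      have : s ∈ K := ⟨⟨le_trans hc0 (le_of_lt hs.1), hs.2⟩, hge⟩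
      have := le_csSup hKcomp.bddAbove this
      linarith [hs.1]
    have hint : (∫ s in c..t1, F s) ≤ 0 := by
      have hnn : 0 ≤ᵐ[volume.restrict (Icc c t1)] (fun s => -F s) := by
        rw [Filter.EventuallyLE, ae_restrict_iff' measurableSet_Icc]
        have hnec : ∀ᵐ s : ℝ ∂volume, s ≠ c := by
          rw [ae_iff]
          have : {s : ℝ | ¬s ≠ c} = {c} := by ext s; simp
          rw [this]; exact measure_singleton c
        filter_upwards [hrb, hnec] with s hrs hsc hmem
        have hs0 : (0:ℝ) ≤ s := le_trans hc0 hmem.1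
        have hsc' : c < s := lt_of_le_of_ne hmem.1 (Ne.symm hsc)
        have hSneg : S s < 0 := hlt s ⟨hsc', hmem.2⟩
        have hIp : 0 < I s := hIpos s hs0
        have hr0 : 0 ≤ r s := (hrs hs0).1
        simp only [Pi.zero_apply, hF]
        nlinarith [mul_pos hβ hIp, mul_nonneg hr0 (neg_nonneg.2 (le_of_lt hSneg))]
      have h1 : 0 ≤ ∫ s in c..t1, -F s :=
        intervalIntegral.integral_nonneg_of_ae_restrict (le_of_lt hct) hnn
      rw [intervalIntegral.integral_neg] at h1
      linarith
    have := hSdiff c t1 hc0 (le_of_lt hct)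
    linarith
  -- S is nonincreasing on [0,∞)
  have hSanti : ∀ a b : ℝ, 0 ≤ a → a ≤ b → S b ≤ S a := by
    intro a b ha hab
    have hnn : 0 ≤ᵐ[volume.restrict (Icc a b)] F := by
      rw [Filter.EventuallyLE, ae_restrict_iff' measurableSet_Icc]
      filter_upwards [hrb] with s hrs hmem
      have hs0 : (0:ℝ) ≤ s := le_trans ha hmem.1
      have := hrs hs0
      have hIp : 0 < I s := hIpos s hs0
      have hSp : 0 ≤ S s := hSnonneg s hs0
      simp only [Pi.zero_apply, hF]
      nlinarith [mul_nonneg (mul_nonneg hβ.le hSp) hIp.le, mul_nonneg this.1 hSp]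
    have h1 : 0 ≤ ∫ s in a..b, F s :=
      intervalIntegral.integral_nonneg_of_ae_restrict hab hnn
    have := hSdiff a b ha hab
    linarith
  -- The limit L
  set L : ℝ := sInf (S '' Ici 0) with hLdef
  have hne : (S '' Ici 0).Nonempty := ⟨S 0, 0, self_mem_Ici, rfl⟩
  have hbdd : BddBelow (S '' Ici 0) := by
    refine ⟨0, fun v hv => ?_⟩
    obtain ⟨t, ht, rfl⟩ := hv
    exact hSnonneg t ht
  have hL0 : 0 ≤ L := le_csInf hne (fun v hv => by
    obtain ⟨t, ht, rfl⟩ := hv; exact hSnonneg t ht)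
  have hLle : ∀ t : ℝ, 0 ≤ t → L ≤ S t := fun t ht => csInf_le hbdd ⟨t, ht, rfl⟩
  have hTendS : Tendsto S atTop (𝓝 L) := by
    rw [Metric.tendsto_atTop]
    intro ε hε
    obtain ⟨v, hv, hvlt⟩ := exists_lt_of_csInf_lt hne (show L < L + ε by linarith)
    obtain ⟨t0, ht0, rfl⟩ := hv
    refine ⟨t0, fun t ht => ?_⟩
    have ht0' : (0:ℝ) ≤ t := le_trans ht0 ht
    have h1 := hLle t ht0'
    have h2 := hSanti t0 t ht0 ht
    rw [Real.dist_eq, abs_lt]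
    constructor <;> linarith
  -- L < γ / β
  have hLlt : L < γ / β := by
    by_contra hge
    push_neg at hge
    have hLpos : 0 < L := lt_of_lt_of_le (div_pos hγ hβ) hge
    have hSγ : ∀ s : ℝ, 0 ≤ s → γ ≤ β * S s := by
      intro s hs
      have := hLle s hs
      have : γ / β ≤ S s := le_trans hge this
      rw [div_le_iff₀ hβ] at this
      linarith
    have hφnn : ∀ s : ℝ, 0 ≤ s → 0 ≤ φ s := by
      intro s hs
      apply intervalIntegral.integral_nonneg hs
      intro u hu
      have := hSγ u hu.1
      simp only [hψ]; linarith
    have hIy : ∀ s : ℝ, 0 ≤ s → y ≤ I s := by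
      intro s hs
      rw [hIexp s hs]
      nlinarith [Real.one_le_exp (hφnn s hs), hy]
    set T : ℝ := (x + 1) / (β * L * y) with hT
    have hden : 0 < β * L * y := by positivity
    have hTpos : 0 < T := by positivity
    have hintlb : β * L * y * T ≤ ∫ s in (0:ℝ)..T, F s := by
      have hmono : (fun _ : ℝ => β * L * y) ≤ᵐ[volume.restrict (Icc 0 T)] F := by
        rw [Filter.EventuallyLE, ae_restrict_iff' measurableSet_Icc]
        filter_upwards [hrb] with s hrs hmem
        have hs0 : (0:ℝ) ≤ s := hmem.1
        have h1 := hLle s hs0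
        have h2 := hIy s hs0
        have h3 := (hrs hs0).1
        have h4 := hSnonneg s hs0
        simp only [hF]
        nlinarith [mul_nonneg h3 h4, mul_le_mul h1 h2 hy.le h4]
      have h5 := intervalIntegral.integral_mono_ae_restrict (le_of_lt hTpos)
        (intervalIntegrable_const) (hFint 0 T le_rfl (le_of_lt hTpos)) hmono
      rw [intervalIntegral.integral_const, smul_eq_mul, sub_zero] at h5
      linarith [h5]
    have hST := hSeq T (le_of_lt hTpos)
    have hTval : β * L * y * T = x + 1 := by
      rw [hT]; field_simp
    have : S T ≤ -1 := by rw [hST]; linarith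
    have := hSnonneg T (le_of_lt hTpos)
    linarith
  refine ⟨⟨L, hL0, hLlt, hTendS⟩, ?_⟩
  -- I → 0
  obtain ⟨v, hv, hvlt⟩ := exists_lt_of_csInf_lt hne hLlt
  obtain ⟨t0, ht0, rfl⟩ := hv
  set c : ℝ := γ - β * S t0 with hcdef
  have hcpos : 0 < c := by
    rw [lt_div_iff₀ hβ] at hvlt
    simp only [hcdef]; linarith
  have hφbound : ∀ t : ℝ, t0 ≤ t → φ t ≤ φ t0 - c * (t - t0) := by
    intro t ht
    have ht0' : (0:ℝ) ≤ t := le_trans ht0 ht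
    have hadd := intervalIntegral.integral_add_adjacent_intervals
      (hψint 0 t0 le_rfl ht0) (hψint t0 t ht0 ht)
    have hmono : (∫ s in t0..t, ψ s) ≤ ∫ s in t0..t, (β * S t0 - γ) := by
      apply intervalIntegral.integral_mono_on ht (hψint t0 t ht0 ht)
        intervalIntegrable_const
      intro u hu
      have := hSanti t0 u ht0 hu.1
      simp only [hψ]
      nlinarith
    rw [intervalIntegral.integral_const, smul_eq_mul] at hmono
    have : φ t = φ t0 + ∫ s in t0..t, ψ s := by rw [hφ]; linarith [hadd]
    rw [this]
    simp only [hcdef]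
    nlinarith
  have hub : ∀ t : ℝ, t0 ≤ t → I t ≤ I t0 * Real.exp (-c * (t - t0)) := by
    intro t ht
    have ht0' : (0:ℝ) ≤ t := le_trans ht0 ht
    rw [hIexp t ht0', hIexp t0 ht0]
    rw [mul_assoc, ← Real.exp_add]
    apply mul_le_mul_of_nonneg_left _ (le_of_lt hy)
    apply Real.exp_le_exp.2
    have := hφbound t ht
    linarith
  have hubt : Tendsto (fun t : ℝ => I t0 * Real.exp (-c * (t - t0))) atTop (𝓝 0) := by
    have h0 : Tendsto (fun t : ℝ => t - t0) atTop atTop :=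
      tendsto_atTop_add_const_right atTop (-t0) tendsto_id
    have h1 : Tendsto (fun t : ℝ => -c * (t - t0)) atTop atBot :=
      h0.const_mul_atTop_of_neg (neg_lt_zero.2 hcpos)
    have h2 := Real.tendsto_exp_atBot.comp h1
    have := h2.const_mul (I t0)
    simpa using this
  apply tendsto_of_tendsto_of_tendsto_of_le_of_le' tendsto_const_nhds hubt
  · filter_upwards [eventually_ge_atTop (0:ℝ)] with t ht
    exact le_of_lt (hIpos t ht)
  · filter_upwards [eventually_ge_atTop t0] with t ht
    exact hub t ht

/-- For any solution of the controlled SIR system with `S(0) ≥ 0`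
and `I(0) > 0`, the limit of `S` at infinity exists and lies in `[0, γ/β)`, and
`I(t) → 0` as `t → ∞`. -/
theorem controlled_SIR_longtime_limits
    (β γ : ℝ) (hβ : 0 < β) (hγ : 0 < γ)
    (r : ℝ → ℝ) (hr : Admissible r)
    (x y : ℝ) (hx : 0 ≤ x) (hy : 0 < y)
    (S I : ℝ → ℝ) (hSI : IsSIRSol β γ r x y S I) :
    (∃ L : ℝ, 0 ≤ L ∧ L < γ / β ∧ Tendsto S atTop (𝓝 L)) ∧
    Tendsto I atTop (𝓝 0) := by
  obtain ⟨hrm, hrb⟩ := hr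
  obtain ⟨hS, hI, hSeq, hIeq⟩ := hSI
  exact aux_main β γ hβ hγ r hrm hrb x y hx hy S I hS hI hSeq hIeq
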